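/- Let α > 1 be a real algebraic number and let ξ > 0 be a real number. If ‖ξα^n‖ < 1/L(α) for every positive integer n, then α is a PV-number or a Salem number and ξ ∈ ℚ(α). -/

import Mathlib

open Polynomial Filter

/-- A Pisot–Vijayaraghavan (PV) number: a real algebraic integer `α > 1` all of whose
conjugates other than `α` itself have absolute value strictly less than `1`. -/
def IsPVNumber (α : ℝ) : Prop :=
  1 < α ∧ IsIntegral ℤ α ∧
    ∀ z : ℂ, aeval z (minpoly ℚ α) = 0 → z ≠ (α : ℂ) → ‖z‖ < 1

/-- A Salem number: a real algebraic integer `α > 1` all of whose conjugates lie in the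
closed unit disc, with at least one conjugate on the unit circle. -/
def IsSalemNumber (α : ℝ) : Prop :=
  1 < α ∧ IsIntegral ℤ α ∧
    (∀ z : ℂ, aeval z (minpoly ℚ α) = 0 → z ≠ (α : ℂ) → ‖z‖ ≤ 1) ∧
    ∃ z : ℂ, aeval z (minpoly ℚ α) = 0 ∧ ‖z‖ = 1

private lemma sum_Icc_swap {M : Type*} [AddCommMonoid M] (d : ℕ) (F : ℕ → ℕ → M) :
    ∑ j ∈ Finset.range d, ∑ k ∈ Finset.Icc (j+1) d, F j k
      = ∑ k ∈ Finset.range (d+1), ∑ j ∈ Finset.range k, F j k := by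
  rw [Finset.sum_sigma', Finset.sum_sigma']
  refine Finset.sum_nbij' (fun x => (⟨x.2, x.1⟩ : Σ _ : ℕ, ℕ))
    (fun x => (⟨x.2, x.1⟩ : Σ _ : ℕ, ℕ)) ?_ ?_ ?_ ?_ ?_ <;>
    simp only [Finset.mem_sigma, Finset.mem_range, Finset.mem_Icc] <;>
    intro x hx <;> first | omega | trivial

private lemma tel_main {R : Type*} [CommRing R] (Q : R[X]) (d : ℕ) (hd : Q.natDegree < d + 1)
    (w z : R) :
    (z - w) * ∑ j ∈ Finset.range d, (∑ k ∈ Finset.Icc (j+1) d, Q.coeff k * w^(k-1-j)) * z^j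
      = Q.eval z - Q.eval w := by
  have hlhs : (z - w) * ∑ j ∈ Finset.range d,
        (∑ k ∈ Finset.Icc (j+1) d, Q.coeff k * w^(k-1-j)) * z^j
      = ∑ j ∈ Finset.range d, ∑ k ∈ Finset.Icc (j+1) d,
          Q.coeff k * (w^(k-(j+1)) * z^(j+1) - w^(k-j) * z^j) := by
    rw [Finset.mul_sum]
    refine Finset.sum_congr rfl fun j _ => ?_
    rw [Finset.sum_mul, Finset.mul_sum]
    refine Finset.sum_congr rfl fun k hk => ?_
    have hk' := Finset.mem_Icc.mp hk
    have h1 : k - 1 - j = k - (j+1) := by omega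
    have h2 : w * w ^ (k - (j+1)) = w ^ (k - j) := by
      rw [← pow_succ']
      congr 1
      omega
    rw [h1]
    calc (z - w) * (Q.coeff k * w ^ (k-(j+1)) * z ^ j)
        = Q.coeff k * (w^(k-(j+1)) * (z^j * z) - (w * w^(k-(j+1))) * z^j) := by ring
      _ = Q.coeff k * (w^(k-(j+1)) * z^(j+1) - w^(k-j) * z^j) := by
          rw [h2, ← pow_succ]
  rw [hlhs, sum_Icc_swap d (fun j k => Q.coeff k * (w^(k-(j+1)) * z^(j+1) - w^(k-j) * z^j))]
  have htel : ∀ k ∈ Finset.range (d+1),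
      ∑ j ∈ Finset.range k, Q.coeff k * (w^(k-(j+1)) * z^(j+1) - w^(k-j) * z^j)
        = Q.coeff k * (z^k - w^k) := by
    intro k _
    rw [← Finset.mul_sum]
    congr 1
    have := Finset.sum_range_sub (f := fun j => w^(k-j) * z^j) k
    simpa using this
  rw [Finset.sum_congr rfl htel]
  have hz := Polynomial.eval_eq_sum_range' hd z
  have hw := Polynomial.eval_eq_sum_range' hd w
  rw [hz, hw, ← Finset.sum_sub_distrib]
  exact Finset.sum_congr rfl fun k _ => by ring

private lemma tel_self {R : Type*} [CommRing R] (Q : R[X]) (d : ℕ) (hd : Q.natDegree < d + 1)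
    (hd0 : 0 < d) (w : R) :
    ∑ j ∈ Finset.range d, (∑ k ∈ Finset.Icc (j+1) d, Q.coeff k * w^(k-1-j)) * w^j
      = (derivative Q).eval w := by
  have hlhs : ∑ j ∈ Finset.range d, (∑ k ∈ Finset.Icc (j+1) d, Q.coeff k * w^(k-1-j)) * w^j
      = ∑ j ∈ Finset.range d, ∑ k ∈ Finset.Icc (j+1) d, Q.coeff k * w^(k-1) := by
    refine Finset.sum_congr rfl fun j _ => ?_
    rw [Finset.sum_mul]
    refine Finset.sum_congr rfl fun k hk => ?_
    have hk' := Finset.mem_Icc.mp hk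
    rw [mul_assoc, ← pow_add]
    congr 2
    omega
  rw [hlhs, sum_Icc_swap d (fun j k => Q.coeff k * w^(k-1))]
  have hder : (derivative Q).natDegree < d := by
    refine lt_of_le_of_lt (Polynomial.natDegree_derivative_le Q) ?_
    omega
  rw [Polynomial.eval_eq_sum_range' hder w]
  rw [Finset.sum_congr rfl (fun k (_ : k ∈ Finset.range (d+1)) =>
    (Finset.sum_const _ : ∑ _j ∈ Finset.range k, Q.coeff k * w^(k-1) = _))]
  simp only [Finset.card_range]
  rw [Finset.sum_range_succ']
  simp only [zero_smul, add_zero]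
  refine Finset.sum_congr rfl fun k _ => ?_
  simp only [Polynomial.coeff_derivative, nsmul_eq_mul, Nat.add_sub_cancel]
  push_cast
  ring

/-- Let `α > 1` be a real algebraic number with primitive integer minimal polynomial `p`,
and set `L(α) := ∑ |coefficients of p|`. If `ξ > 0` satisfies `‖ξ αⁿ‖ < 1/L(α)` for every
`n ≥ 1` (where `‖x‖ = min({x}, 1 - {x})` is the distance to the nearest integer), then `α`
is a PV-number or a Salem number and `ξ ∈ ℚ(α)`. -/
theorem pisot_or_salem_of_small_norms (α ξ : ℝ) (hα : 1 < α) (hξ : 0 < ξ)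
    (p : Polynomial ℤ) (hp0 : p ≠ 0) (hproot : aeval α p = 0) (hprim : p.IsPrimitive)
    (hpdeg : p.natDegree = (minpoly ℚ α).natDegree)
    (hsmall : ∀ n : ℕ, 1 ≤ n →
      min (Int.fract (ξ * α ^ n)) (1 - Int.fract (ξ * α ^ n)) <
        1 / (∑ i ∈ Finset.range (p.natDegree + 1), (|p.coeff i| : ℝ))) :
    (IsPVNumber α ∨ IsSalemNumber α) ∧ ξ ∈ IntermediateField.adjoin ℚ ({α} : Set ℝ) := by
  classical
  have hpq0 : p.map (algebraMap ℤ ℚ) ≠ 0 :=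
    (Polynomial.map_ne_zero_iff (algebraMap ℤ ℚ).injective_int).mpr hp0
  have hpqroot : aeval α (p.map (algebraMap ℤ ℚ)) = 0 := by
    rw [aeval_map_algebraMap]; exact hproot
  have hint : IsIntegral ℚ α := IsAlgebraic.isIntegral ⟨_, hpq0, hpqroot⟩
  set P : ℚ[X] := minpoly ℚ α with hPdef
  set d : ℕ := P.natDegree with hddef
  have hd : 0 < d := minpoly.natDegree_pos hint
  have hPmonic : P.Monic := minpoly.monic hint
  have hProot : aeval α P = 0 := minpoly.aeval ℚ α
  have hPirr : Irreducible P := minpoly.irreducible hint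
  have hP0 : P ≠ 0 := minpoly.ne_zero hint
  rw [hpdeg] at hsmall
  -- relation between p and P
  have haQ : (p.leadingCoeff : ℚ) ≠ 0 := by
    exact_mod_cast Polynomial.leadingCoeff_ne_zero.mpr hp0
  have hcoeff : ∀ i, ((p.coeff i : ℚ)) = P.coeff i * (p.leadingCoeff : ℚ) := by
    obtain ⟨q, hq⟩ : P ∣ p.map (algebraMap ℤ ℚ) := minpoly.dvd ℚ α hpqroot
    have hq0 : q ≠ 0 := by rintro rfl; rw [mul_zero] at hq; exact hpq0 hq
    have hdegmap : (p.map (algebraMap ℤ ℚ)).natDegree = p.natDegree :=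
      natDegree_map_eq_of_injective (algebraMap ℤ ℚ).injective_int p
    have hqdeg : q.natDegree = 0 := by
      have h1 := congrArg natDegree hq
      rw [hdegmap, natDegree_mul hP0 hq0, hpdeg] at h1
      exact Nat.left_eq_add.mp h1
    obtain ⟨a, rfl⟩ : ∃ a : ℚ, q = C a := ⟨q.coeff 0, eq_C_of_natDegree_eq_zero hqdeg⟩
    have hlead : a = (p.leadingCoeff : ℚ) := by
      have h2 := congrArg leadingCoeff hq
      rw [leadingCoeff_mul, leadingCoeff_C, hPmonic.leadingCoeff, one_mul] at h2
      rw [← h2, Polynomial.leadingCoeff, Polynomial.leadingCoeff, hdegmap, coeff_map]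
      rfl
    intro i
    have := congrArg (fun r => Polynomial.coeff r i) hq
    simpa [coeff_map, coeff_mul_C, hlead] using this
  -- the sum of absolute values of coefficients
  set L : ℝ := ∑ i ∈ Finset.range (d + 1), (|p.coeff i| : ℝ) with hL
  set x : ℕ → ℤ := fun n => round (ξ * α ^ n) with hx
  have hcoeffd : p.coeff d ≠ 0 := by
    rw [← hpdeg]; exact Polynomial.leadingCoeff_ne_zero.mpr hp0
  have hL1 : (1:ℝ) ≤ L := by
    have h1 : (1:ℝ) ≤ (|p.coeff d| : ℝ) := by
      have := Int.one_le_abs hcoeffd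
      exact_mod_cast this
    refine le_trans h1 (Finset.single_le_sum (f := fun i => (|p.coeff i| : ℝ)) ?_ ?_)
    · intro i _; positivity
    · exact Finset.self_mem_range_succ d
  have hLpos : (0:ℝ) < L := lt_of_lt_of_le one_pos hL1
  have hεlt : ∀ n, 1 ≤ n → |ξ * α ^ n - x n| < 1 / L := by
    intro n hn
    calc |ξ * α ^ n - x n|
        = min (Int.fract (ξ * α ^ n)) (1 - Int.fract (ξ * α ^ n)) := abs_sub_round_eq_min _
      _ < 1 / L := hsmall n hn
  have hε1 : ∀ n, 1 ≤ n → |ξ * α ^ n - x n| ≤ 1 := by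
    intro n hn
    refine (hεlt n hn).le.trans ?_
    rw [div_le_one hLpos]
    exact hL1
  -- the integer recurrence
  have hrecZ : ∀ n, 1 ≤ n → ∑ i ∈ Finset.range (d+1), p.coeff i * x (n+i) = 0 := by
    intro n hn
    have hzero : ∑ i ∈ Finset.range (d+1), (p.coeff i : ℝ) * (ξ * α^(n+i)) = 0 := by
      have haev : (0:ℝ) = ∑ i ∈ Finset.range (d+1), (p.coeff i : ℝ) * α^i := by
        rw [← hproot, aeval_eq_sum_range' (n := d+1) (by omega)]
        simp [zsmul_eq_mul]
      calc ∑ i ∈ Finset.range (d+1), (p.coeff i : ℝ) * (ξ * α^(n+i))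
          = (ξ * α ^ n) * ∑ i ∈ Finset.range (d+1), (p.coeff i : ℝ) * α^i := by
            rw [Finset.mul_sum]
            exact Finset.sum_congr rfl fun i _ => by rw [pow_add]; ring
        _ = 0 := by rw [← haev, mul_zero]
    have hcast : ((∑ i ∈ Finset.range (d+1), p.coeff i * x (n+i) : ℤ) : ℝ)
        = ∑ i ∈ Finset.range (d+1), (p.coeff i : ℝ) * ((x (n+i) : ℝ) - ξ * α^(n+i)) := by
      push_cast
      rw [Finset.sum_congr rfl (fun i (_ : i ∈ Finset.range (d+1)) =>
        (by ring : (p.coeff i : ℝ) * ((x (n+i) : ℝ) - ξ * α^(n+i))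
          = (p.coeff i : ℝ) * (x (n+i) : ℝ) - (p.coeff i : ℝ) * (ξ * α^(n+i)))),
        Finset.sum_sub_distrib, hzero, sub_zero]
    have habs : |((∑ i ∈ Finset.range (d+1), p.coeff i * x (n+i) : ℤ) : ℝ)| < 1 := by
      rw [hcast]
      have hle : |∑ i ∈ Finset.range (d+1), (p.coeff i : ℝ) * ((x (n+i) : ℝ) - ξ * α^(n+i))|
          ≤ ∑ i ∈ Finset.range (d+1), (|p.coeff i| : ℝ) * |(x (n+i) : ℝ) - ξ * α^(n+i)| := by
        refine (Finset.abs_sum_le_sum_abs _ _).trans (le_of_eq ?_)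
        refine Finset.sum_congr rfl fun i _ => ?_
        rw [abs_mul]
      refine lt_of_le_of_lt hle ?_
      have hstep : ∑ i ∈ Finset.range (d+1), (|p.coeff i| : ℝ) * |(x (n+i) : ℝ) - ξ * α^(n+i)|
          < ∑ i ∈ Finset.range (d+1), (|p.coeff i| : ℝ) * (1 / L) := by
        refine Finset.sum_lt_sum (fun i _ => ?_) ⟨d, Finset.self_mem_range_succ d, ?_⟩
        · refine mul_le_mul_of_nonneg_left ?_ (by positivity)
          rw [abs_sub_comm]
          exact (hεlt (n+i) (by omega)).le
        · refine mul_lt_mul_of_pos_left ?_ ?_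
          · rw [abs_sub_comm]; exact hεlt (n+d) (by omega)
          · have h1 := Int.one_le_abs hcoeffd
            have h2 : (1:ℝ) ≤ (|p.coeff d| : ℝ) := by exact_mod_cast h1
            linarith
      refine lt_of_lt_of_le hstep (le_of_eq ?_)
      rw [← Finset.sum_mul, ← hL, mul_one_div, div_self hLpos.ne']
    show ∑ i ∈ Finset.range (d+1), p.coeff i * x (n+i) = 0
    rw [← Int.abs_lt_one_iff]
    exact_mod_cast habs
  -- the shifted sequence
  set u : ℕ → ℤ := fun n => x (n+1) with hu
  have hrecQ : ∀ n, ∑ i ∈ Finset.range (d+1), P.coeff i * (u (n+i) : ℚ) = 0 := by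
    intro n
    have h0 := hrecZ (n+1) (Nat.le_add_left 1 n)
    have h1 : ∑ i ∈ Finset.range (d+1), (p.coeff i : ℚ) * (u (n+i) : ℚ) = 0 := by
      have h2 := congrArg (Int.cast : ℤ → ℚ) h0
      push_cast at h2
      rw [← h2]
      refine Finset.sum_congr rfl fun i _ => ?_
      have h3 : n + 1 + i = n + i + 1 := by omega
      rw [h3]
    have h2 : ∑ i ∈ Finset.range (d+1), P.coeff i * (u (n+i) : ℚ)
        = (p.leadingCoeff : ℚ)⁻¹ * ∑ i ∈ Finset.range (d+1), (p.coeff i : ℚ) * (u (n+i) : ℚ) := by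
      rw [Finset.mul_sum]
      refine Finset.sum_congr rfl fun i _ => ?_
      rw [hcoeff i]
      field_simp
    rw [h2, h1, mul_zero]
  -- complex recurrence
  have hrecC : ∀ n, ∑ i ∈ Finset.range (d+1), ((P.coeff i : ℂ)) * (u (n+i) : ℂ) = 0 := by
    intro n
    have h := congrArg (algebraMap ℚ ℂ) (hrecQ n)
    rw [map_sum, map_zero] at h
    rw [← h]
    refine Finset.sum_congr rfl fun i _ => ?_
    rw [map_mul, eq_ratCast, eq_ratCast]
    norm_cast
  -- roots of P over ℂ
  set Pc : ℂ[X] := P.map (algebraMap ℚ ℂ) with hPc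
  have hP0 : P ≠ 0 := minpoly.ne_zero hint
  have hPc0 : Pc ≠ 0 := (Polynomial.map_ne_zero_iff (algebraMap ℚ ℂ).injective).mpr hP0
  have haevalPc : ∀ z : ℂ, aeval z P = eval z Pc := fun z => by
    rw [hPc, eval_map]; rfl
  have hsep : P.Separable := hPirr.separable
  have hnodup : Pc.roots.Nodup := nodup_roots hsep.map
  have hcards : Pc.roots.toFinset.card = d := by
    rw [Multiset.toFinset_card_of_nodup hnodup]
    rw [← (IsAlgClosed.splits Pc).natDegree_eq_card_roots, hPc, natDegree_map]
  have hfincard : Fintype.card {z // z ∈ Pc.roots.toFinset} = d := by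
    rw [Fintype.card_coe]; exact hcards
  set e := Fintype.equivFinOfCardEq hfincard with he
  set β : Fin d → ℂ := fun i => ((e.symm i : {z // z ∈ Pc.roots.toFinset}) : ℂ) with hβ
  have hβinj : Function.Injective β := fun i j h => by
    have := e.symm.injective (Subtype.ext h); exact this
  have hβroot : ∀ i, aeval (β i) P = 0 := by
    intro i
    rw [haevalPc]
    have hmem := (e.symm i).2
    rw [Multiset.mem_toFinset, mem_roots hPc0] at hmem
    exact hmem
  have hβsurj : ∀ z : ℂ, aeval z P = 0 → ∃ i, β i = z := by
    intro z hz
    rw [haevalPc] at hz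
    have hzmem : z ∈ Pc.roots.toFinset := Multiset.mem_toFinset.mpr ((mem_roots hPc0).mpr hz)
    exact ⟨e ⟨z, hzmem⟩, by rw [hβ]; simp⟩
  have hαC : aeval ((α:ℂ)) P = 0 := by
    have h2 := aeval_algHom_apply (IsScalarTower.toAlgHom ℚ ℝ ℂ) α P
    rw [hProot, map_zero] at h2
    simpa using h2
  obtain ⟨iα, hiα⟩ := hβsurj (α:ℂ) hαC
  -- coefficient facts at d
  have hPd : P.coeff d = 1 := hPmonic.coeff_natDegree
  -- powers recurrence for roots
  have hβpow : ∀ (i : Fin d) (n : ℕ), β i ^ (n + d)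
      = -∑ k ∈ Finset.range d, ((P.coeff k : ℂ)) * β i ^ (n + k) := by
    intro i n
    have h0 : ∑ k ∈ Finset.range (d+1), ((P.coeff k : ℂ)) * β i ^ k = 0 := by
      have h := hβroot i
      rw [aeval_eq_sum_range' (n := d+1) (by omega)] at h
      rw [← h]
      refine Finset.sum_congr rfl fun k _ => ?_
      rw [Algebra.smul_def, eq_ratCast]
    rw [Finset.sum_range_succ, hPd] at h0
    have hβd : β i ^ d = -∑ k ∈ Finset.range d, ((P.coeff k : ℂ)) * β i ^ k := by
      push_cast at h0 ⊢
      linear_combination h0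
    calc β i ^ (n + d) = β i ^ n * β i ^ d := by rw [pow_add]
      _ = -∑ k ∈ Finset.range d, ((P.coeff k : ℂ)) * β i ^ (n + k) := by
          rw [hβd, mul_neg, Finset.mul_sum]
          congr 1
          exact Finset.sum_congr rfl fun k _ => by rw [pow_add]; ring
  -- Vandermonde solution
  set V : Matrix (Fin d) (Fin d) ℂ := (Matrix.vandermonde β).transpose with hV
  have hVdet : IsUnit V.det := by
    rw [hV, Matrix.det_transpose]
    exact isUnit_iff_ne_zero.mpr (Matrix.det_vandermonde_ne_zero_iff.mpr hβinj)
  set cvec : Fin d → ℂ := V⁻¹.mulVec (fun j => (u (j:ℕ) : ℂ)) with hc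
  have hinit : ∀ j : Fin d, ∑ i, cvec i * β i ^ (j:ℕ) = (u (j:ℕ) : ℂ) := by
    intro j
    have hmv : V.mulVec cvec = fun j : Fin d => (u (j:ℕ) : ℂ) := by
      rw [hc, Matrix.mulVec_mulVec, Matrix.mul_nonsing_inv _ hVdet, Matrix.one_mulVec]
    have h := congrFun hmv j
    rw [← h]
    simp only [Matrix.mulVec, dotProduct, hV, Matrix.transpose_apply,
      Matrix.vandermonde_apply]
    exact Finset.sum_congr rfl fun i _ => mul_comm _ _
  have hdecomp : ∀ n, (u n : ℂ) = ∑ i, cvec i * β i ^ n := by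
    intro n
    induction n using Nat.strong_induction_on with
    | _ n ih =>
      rcases Nat.lt_or_ge n d with h | h
      · exact (hinit ⟨n, h⟩).symm
      · obtain ⟨m, rfl⟩ : ∃ m, n = m + d := ⟨n - d, (Nat.sub_add_cancel h).symm⟩
        have hu : (u (m+d) : ℂ) = -∑ i ∈ Finset.range d, ((P.coeff i : ℂ)) * (u (m+i) : ℂ) := by
          have h0 := hrecC m
          rw [Finset.sum_range_succ, hPd] at h0
          push_cast at h0 ⊢
          linear_combination h0
        rw [hu]
        have hrw : ∀ i ∈ Finset.range d, ((P.coeff i : ℂ)) * (u (m+i) : ℂ)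
            = ((P.coeff i : ℂ)) * ∑ k, cvec k * β k ^ (m+i) := fun i hi => by
          rw [ih (m+i) (by have := Finset.mem_range.mp hi; omega)]
        rw [Finset.sum_congr rfl hrw]
        calc -∑ i ∈ Finset.range d, ((P.coeff i : ℂ)) * ∑ k, cvec k * β k ^ (m+i)
            = -∑ i ∈ Finset.range d, ∑ k, cvec k * (((P.coeff i : ℂ)) * β k ^ (m+i)) := by
              congr 1
              exact Finset.sum_congr rfl fun i _ => by rw [Finset.mul_sum]; exact Finset.sum_congr rfl fun k _ => by ring
          _ = -∑ k, ∑ i ∈ Finset.range d, cvec k * (((P.coeff i : ℂ)) * β k ^ (m+i)) := by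
              rw [Finset.sum_comm]
          _ = ∑ k, cvec k * β k ^ (m+d) := by
              rw [← Finset.sum_neg_distrib]
              refine Finset.sum_congr rfl fun k _ => ?_
              rw [hβpow k m, mul_neg, ← Finset.mul_sum]
  have hPcdeg : Pc.natDegree = d := by rw [hPc, natDegree_map]
  set sval : ℂ → ℕ → ℂ :=
    fun w j => ∑ k ∈ Finset.Icc (j+1) d, ((P.coeff k : ℂ)) * w^(k-1-j) with hsval
  have hcoe : ∀ (w : ℂ) j, (∑ k ∈ Finset.Icc (j+1) d, Pc.coeff k * w^(k-1-j)) = sval w j := by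
    intro w j
    refine Finset.sum_congr rfl fun k _ => ?_
    rw [hPc, coeff_map, eq_ratCast]
  have hV1 : ∀ w z : ℂ, (z - w) * ∑ j ∈ Finset.range d, sval w j * z^j
      = aeval z P - aeval w P := by
    intro w z
    have h := tel_main Pc d (by omega) w z
    rw [haevalPc z, haevalPc w, ← h]
    congr 1
    exact Finset.sum_congr rfl fun j _ => by rw [hcoe w j]
  have hV2 : ∀ w : ℂ, ∑ j ∈ Finset.range d, sval w j * w^j = aeval w (derivative P) := by
    intro w
    have h := tel_self Pc d (by omega) hd w
    have h2 : (derivative Pc).eval w = aeval w (derivative P) := by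
      rw [hPc, derivative_map, eval_map]; rfl
    rw [← h2, ← h]
    exact Finset.sum_congr rfl fun j _ => by rw [hcoe w j]
  -- vanishing at other roots
  have hroot0 : ∀ (w : ℂ), aeval w P = 0 → ∀ i : Fin d, β i ≠ w →
      ∑ j ∈ Finset.range d, sval w j * β i ^ j = 0 := by
    intro w hw i hne
    have h := hV1 w (β i)
    rw [hβroot i, hw, sub_zero] at h
    rcases mul_eq_zero.mp h with h' | h'
    · exact absurd (sub_eq_zero.mp h') hne
    · exact h'
  have hder0 : ∀ i : Fin d, aeval (β i) (derivative P) ≠ 0 := by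
    intro i
    obtain ⟨a, b, hab⟩ := hsep
    have h := congrArg (aeval (β i)) hab
    rw [map_add, map_mul, map_mul, map_one, hβroot i, mul_zero, zero_add] at h
    intro h0
    rw [h0, mul_zero] at h
    exact one_ne_zero h.symm
  -- annihilation identity
  have hann : ∀ (cc : Fin d → ℂ) (w : ℂ) (n : ℕ),
      ∑ j ∈ Finset.range d, sval w j * (∑ i, cc i * β i ^ (n+j))
        = ∑ i, cc i * β i ^ n * (∑ j ∈ Finset.range d, sval w j * β i ^ j) := by
    intro cc w n
    rw [Finset.sum_congr rfl (fun j (_ : j ∈ Finset.range d) =>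
      Finset.mul_sum Finset.univ (fun i => cc i * β i ^ (n+j)) (sval w j)), Finset.sum_comm]
    refine Finset.sum_congr rfl fun i _ => ?_
    rw [Finset.mul_sum]
    refine Finset.sum_congr rfl fun j _ => ?_
    rw [pow_add]
    ring
  -- the kill lemma
  have hkill : ∀ (cc : Fin d → ℂ) (i0 : Fin d), 1 < ‖β i0‖ →
      (∀ n : ℕ, ‖∑ i, cc i * β i ^ n‖ ≤ 1) → cc i0 = 0 := by
    intro cc i0 hβ1 hbound
    by_contra hcc
    set w := β i0 with hw
    set D := aeval w (derivative P) with hD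
    have hDne : D ≠ 0 := hder0 i0
    set C := ∑ j ∈ Finset.range d, ‖sval w j‖ with hC
    have hkey : ∀ n : ℕ, ‖cc i0‖ * ‖β i0‖ ^ n * ‖D‖ ≤ C := by
      intro n
      have h1 : ∑ j ∈ Finset.range d, sval w j * (∑ i, cc i * β i ^ (n+j))
          = cc i0 * β i0 ^ n * D := by
        rw [hann cc w n]
        rw [Finset.sum_eq_single_of_mem i0 (Finset.mem_univ i0) ?_]
        · rw [hV2 w]
        · intro i _ hne
          rw [hroot0 w (hβroot i0) i (fun h => hne (hβinj h)), mul_zero]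
      have h2 : ‖∑ j ∈ Finset.range d, sval w j * (∑ i, cc i * β i ^ (n+j))‖ ≤ C := by
        refine (norm_sum_le _ _).trans (Finset.sum_le_sum fun j _ => ?_)
        rw [norm_mul]
        exact mul_le_of_le_one_right (norm_nonneg _) (hbound (n+j))
      rw [h1, norm_mul, norm_mul, norm_pow] at h2
      exact h2
    obtain ⟨n, hn⟩ := pow_unbounded_of_one_lt (C / (‖cc i0‖ * ‖D‖)) hβ1
    have h3 := hkey n
    have hpos : 0 < ‖cc i0‖ * ‖D‖ :=
      mul_pos (norm_pos_iff.mpr hcc) (norm_pos_iff.mpr hDne)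
    rw [div_lt_iff₀ hpos] at hn
    nlinarith [h3]
  -- the corrected coefficients
  set cprime : Fin d → ℂ := fun i => cvec i - (if i = iα then ((ξ:ℂ) * (α:ℂ)) else 0)
    with hcprime
  have hsdecomp : ∀ n : ℕ, ∑ i, cprime i * β i ^ n
      = (u n : ℂ) - (ξ:ℂ) * (α:ℂ)^(n+1) := by
    intro n
    rw [hcprime]
    simp only [sub_mul, ite_mul, zero_mul]
    rw [Finset.sum_sub_distrib, Finset.sum_ite_eq' Finset.univ iα (fun i => (ξ:ℂ) * (α:ℂ) * β i ^ n)]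
    rw [if_pos (Finset.mem_univ iα), hiα, ← hdecomp n]
    ring
  have hsbound : ∀ n : ℕ, ‖∑ i, cprime i * β i ^ n‖ ≤ 1 := by
    intro n
    rw [hsdecomp n]
    have hcast : (u n : ℂ) - (ξ:ℂ) * (α:ℂ)^(n+1) = (((x (n+1) : ℝ) - ξ * α^(n+1) : ℝ) : ℂ) := by
      push_cast
      ring
    rw [hcast, Complex.norm_real, Real.norm_eq_abs, abs_sub_comm]
    exact hε1 (n+1) (by omega)
  have hαabs : 1 < ‖β iα‖ := by
    rw [hiα, Complex.norm_real, Real.norm_eq_abs, abs_of_pos (lt_trans one_pos hα)]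
    exact hα
  have hciα : cvec iα = (ξ:ℂ) * (α:ℂ) := by
    have h := hkill cprime iα hαabs hsbound
    rw [hcprime] at h
    simp only [if_pos rfl] at h
    exact sub_eq_zero.mp h
  have hbig : ∀ i : Fin d, i ≠ iα → 1 < ‖β i‖ → cvec i = 0 := by
    intro i hne habs
    have h := hkill cprime i habs hsbound
    rw [hcprime] at h
    simp only [if_neg hne, sub_zero] at h
    exact h
  -- polynomial with rational coefficients built from the sequence
  set S : ℕ → ℚ[X] := fun j => ∑ k ∈ Finset.Icc (j+1) d, C (P.coeff k) * X^(k-1-j) with hS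
  have hSval : ∀ (w : ℂ) (j : ℕ), aeval w (S j) = sval w j := by
    intro w j
    rw [hS, map_sum]
    refine Finset.sum_congr rfl fun k _ => ?_
    rw [map_mul, aeval_C, map_pow, aeval_X, eq_ratCast]
  -- evaluation of the G polynomial at roots
  have huann : ∀ (w : ℂ) (n : ℕ), ∑ j ∈ Finset.range d, sval w j * (u (n+j) : ℂ)
      = ∑ i, cvec i * β i ^ n * (∑ j ∈ Finset.range d, sval w j * β i ^ j) := by
    intro w n
    rw [← hann cvec w n]
    refine Finset.sum_congr rfl fun j _ => ?_
    rw [hdecomp (n+j)]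
  have hconj : ∀ i : Fin d, i ≠ iα → ‖β i‖ ≤ 1 := by
    intro i0 hne
    by_contra habs
    push_neg at habs
    have hc0 : cvec i0 = 0 := hbig i0 hne habs
    set G : ℚ[X] := ∑ j ∈ Finset.range d, C ((u j : ℚ)) * S j with hG
    have hGval : ∀ w : ℂ, aeval w G = ∑ j ∈ Finset.range d, sval w j * (u j : ℂ) := by
      intro w
      rw [hG, map_sum]
      refine Finset.sum_congr rfl fun j _ => ?_
      rw [map_mul, aeval_C, hSval, eq_ratCast]
      push_cast
      ring
    have hGroot : ∀ i : Fin d, aeval (β i) G = cvec i * aeval (β i) (derivative P) := by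
      intro i
      rw [hGval]
      have h0 : ∑ j ∈ Finset.range d, sval (β i) j * (u j : ℂ)
          = ∑ j ∈ Finset.range d, sval (β i) j * (u (0+j) : ℂ) := by
        refine Finset.sum_congr rfl fun j _ => ?_
        rw [zero_add]
      rw [h0, huann (β i) 0]
      rw [Finset.sum_eq_single_of_mem i (Finset.mem_univ i) ?_]
      · rw [hV2 (β i), pow_zero, mul_one]
      · intro k _ hnk
        rw [hroot0 (β i) (hβroot i) k (fun h => hnk (hβinj h)), mul_zero]
    have hGi0 : aeval (β i0) G = 0 := by rw [hGroot i0, hc0, zero_mul]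
    have hmin : minpoly ℚ (β i0) = P :=
      (minpoly.eq_of_irreducible_of_monic hPirr (hβroot i0) hPmonic).symm
    have hdvd : P ∣ G := by rw [← hmin]; exact minpoly.dvd ℚ (β i0) hGi0
    have hGα : aeval ((α:ℂ)) G = 0 := by
      obtain ⟨t, ht⟩ := hdvd
      rw [ht, map_mul, hαC, zero_mul]
    have hGα' : aeval ((α:ℂ)) G = ((ξ:ℂ) * (α:ℂ)) * aeval ((α:ℂ)) (derivative P) := by
      rw [← hiα, hGroot iα, hciα, hiα]
    rw [hGα'] at hGα
    have hξα : ((ξ:ℂ) * (α:ℂ)) ≠ 0 :=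
      mul_ne_zero (Complex.ofReal_ne_zero.mpr hξ.ne')
        (Complex.ofReal_ne_zero.mpr (lt_trans one_pos hα).ne')
    have hD := hder0 iα
    rw [hiα] at hD
    rcases mul_eq_zero.mp hGα with h | h
    · exact hξα h
    · exact hD h
  -- real form of the annihilation identity at α
  set sR : ℕ → ℝ := fun j => aeval α (S j) with hsR
  set DR : ℝ := aeval α (derivative P) with hDR
  have hcastS : ∀ j, ((sR j : ℝ) : ℂ) = sval ((α:ℂ)) j := by
    intro j
    rw [← hSval ((α:ℂ)) j, hsR]
    simpa using (aeval_algHom_apply (IsScalarTower.toAlgHom ℚ ℝ ℂ) α (S j)).symm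
  have hcastD : ((DR : ℝ) : ℂ) = aeval ((α:ℂ)) (derivative P) := by
    rw [hDR]
    simpa using (aeval_algHom_apply (IsScalarTower.toAlgHom ℚ ℝ ℂ) α (derivative P)).symm
  have hDR0 : DR ≠ 0 := by
    intro h
    apply hder0 iα
    rw [hiα, ← hcastD, h, Complex.ofReal_zero]
  have hkeyC : ∀ n : ℕ, ∑ j ∈ Finset.range d, sval ((α:ℂ)) j * (u (n+j) : ℂ)
      = ((ξ:ℂ) * (α:ℂ)) * (α:ℂ)^n * aeval ((α:ℂ)) (derivative P) := by
    intro n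
    rw [huann ((α:ℂ)) n]
    rw [Finset.sum_eq_single_of_mem iα (Finset.mem_univ iα) ?_]
    · rw [hciα, hiα, hV2 ((α:ℂ))]
    · intro k _ hnk
      rw [hroot0 ((α:ℂ)) hαC k ?_, mul_zero]
      intro h
      exact hnk (hβinj (by rw [h, hiα]))
  have hkeyR : ∀ n : ℕ, ∑ j ∈ Finset.range d, sR j * (u (n+j) : ℝ) = ξ * α^(n+1) * DR := by
    intro n
    have h := hkeyC n
    have hl : ((∑ j ∈ Finset.range d, sR j * (u (n+j) : ℝ) : ℝ) : ℂ)
        = ∑ j ∈ Finset.range d, sval ((α:ℂ)) j * (u (n+j) : ℂ) := by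
      push_cast
      refine Finset.sum_congr rfl fun j _ => ?_
      rw [← hcastS j]
    have hr : ((ξ * α^(n+1) * DR : ℝ) : ℂ)
        = ((ξ:ℂ) * (α:ℂ)) * (α:ℂ)^n * aeval ((α:ℂ)) (derivative P) := by
      rw [← hcastD]
      push_cast
      ring
    exact Complex.ofReal_injective (hl.trans (h.trans hr.symm))
  -- α is an algebraic integer
  have hintα : IsIntegral ℤ α := by
    set v : Fin d → ℝ := fun j => sR j / DR with hv
    set N : Submodule ℤ ℝ := Submodule.span ℤ (Set.range v) with hN
    set M : Submodule ℤ ℝ := Submodule.span ℤ (Set.range (fun n : ℕ => ξ * α^(n+1))) with hM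
    have hgen : ∀ n : ℕ, ξ * α^(n+1) ∈ N := by
      intro n
      have h : ξ * α^(n+1) = ∑ j : Fin d, (u (n+j)) • v j := by
        have h2 := hkeyR n
        rw [hv]
        calc ξ * α^(n+1) = (∑ j ∈ Finset.range d, sR j * (u (n+j) : ℝ)) / DR := by
              rw [h2]; field_simp
          _ = ∑ j ∈ Finset.range d, (u (n+j)) • (sR j / DR) := by
              rw [Finset.sum_div]
              refine Finset.sum_congr rfl fun j _ => ?_
              rw [zsmul_eq_mul]
              push_cast
              ring
          _ = ∑ j : Fin d, (u (n+j)) • (sR j / DR) := by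
              rw [Finset.sum_range fun j => (u (n+j)) • (sR j / DR)]
      rw [h]
      exact Submodule.sum_mem _ (fun j _ => Submodule.smul_mem _ _
        (Submodule.subset_span ⟨j, rfl⟩))
    have hMN : M ≤ N := by
      rw [hM, Submodule.span_le]
      rintro _ ⟨n, rfl⟩
      exact hgen n
    have hNfg : N.FG := Submodule.fg_span (Set.finite_range v)
    have hNnoeth : IsNoetherian ℤ N := isNoetherian_of_fg_of_noetherian N hNfg
    have hMfg : M.FG := by
      have h1 : (M.comap N.subtype).FG := IsNoetherian.noetherian _
      have h2 : (M.comap N.subtype).map N.subtype = M := by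
        rw [Submodule.map_comap_subtype]
        exact inf_eq_right.mpr hMN
      rw [← h2]
      exact h1.map _
    have hM0 : M ≠ ⊥ := by
      intro h
      have hmem : ξ * α^(0+1) ∈ M := Submodule.subset_span ⟨0, rfl⟩
      rw [h, Submodule.mem_bot] at hmem
      rw [pow_one] at hmem
      exact (mul_ne_zero hξ.ne' (lt_trans one_pos hα).ne') hmem
    have hstab : ∀ m ∈ M, α • m ∈ M := by
      intro m hm
      refine Submodule.span_induction ?_ ?_ ?_ ?_ hm
      · rintro _ ⟨n, rfl⟩
        refine Submodule.subset_span ⟨n+1, ?_⟩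
        simp only [smul_eq_mul]
        ring
      · rw [smul_zero]; exact M.zero_mem
      · intro a b _ _ ha hb
        rw [smul_add]; exact M.add_mem ha hb
      · intro z a _ ha
        rw [smul_comm]
        exact M.smul_mem z ha
    exact isIntegral_of_smul_mem_submodule M hM0 hMfg α hstab
  -- ξ lies in ℚ(α)
  have hξmem : ξ ∈ IntermediateField.adjoin ℚ ({α} : Set ℝ) := by
    set K := IntermediateField.adjoin ℚ ({α} : Set ℝ) with hK
    have hpolymem : ∀ q : ℚ[X], aeval α q ∈ K := by
      intro q
      have h1 : aeval α q ∈ Algebra.adjoin ℚ ({α} : Set ℝ) := by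
        rw [Algebra.adjoin_singleton_eq_range_aeval]
        exact ⟨q, rfl⟩
      exact IntermediateField.algebra_adjoin_le_adjoin ℚ _ h1
    have hαK : α ∈ K := IntermediateField.subset_adjoin ℚ _ rfl
    have hnum : (∑ j ∈ Finset.range d, sR j * (u j : ℝ)) ∈ K := by
      refine sum_mem fun j _ => mul_mem (hpolymem (S j)) ?_
      exact intCast_mem K (u j)
    have hαpos : (0:ℝ) < α := lt_trans one_pos hα
    have hαDR : α * DR ≠ 0 := mul_ne_zero hαpos.ne' hDR0
    have hξeq : ξ = (∑ j ∈ Finset.range d, sR j * (u j : ℝ)) / (α * DR) := by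
      have h := hkeyR 0
      simp only [zero_add, pow_one] at h
      rw [h]
      field_simp
    rw [hξeq]
    exact div_mem hnum (mul_mem hαK (hpolymem (derivative P)))
  refine ⟨?_, hξmem⟩
  by_cases hall : ∀ i : Fin d, i ≠ iα → ‖β i‖ < 1
  · left
    refine ⟨hα, hintα, ?_⟩
    intro z hz hzne
    obtain ⟨i, rfl⟩ := hβsurj z hz
    exact hall i (fun h => hzne (by rw [h, hiα]))
  · right
    push_neg at hall
    obtain ⟨i, hine, hige⟩ := hall
    refine ⟨hα, hintα, ?_, ⟨β i, hβroot i, le_antisymm (hconj i hine) hige⟩⟩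
    intro z hz hzne
    obtain ⟨k, rfl⟩ := hβsurj z hz
    exact hconj k (fun h => hzne (by rw [h, hiα]))
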